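/- For any graph G, the TAR reconfiguration threshold of G is at most max(pw(G), 1), where pw(G) is the pathwidth of G. -/
import Mathlib


/-- `S` is an independent set in `G`. -/
def IsIndepSet {V : Type*} (G : SimpleGraph V) (S : Finset V) : Prop :=
  ∀ u ∈ S, ∀ v ∈ S, ¬ G.Adj u v

/-- `G` has a path decomposition of width at most `k`. -/
def HasPathDecompOfWidth {V : Type*} (G : SimpleGraph V) (k : ℕ) : Prop :=
  ∃ (r : ℕ) (X : ℕ → Finset V),
    (∀ v : V, ∃ i ≤ r, v ∈ X i) ∧
    (∀ u v : V, G.Adj u v → ∃ i ≤ r, u ∈ X i ∧ v ∈ X i) ∧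
    (∀ (v : V) (i j l : ℕ), i ≤ j → j ≤ l → l ≤ r → v ∈ X i → v ∈ X l → v ∈ X j) ∧
    (∀ i ≤ r, (X i).card ≤ k + 1)

/-- `A` can be `k`-TAR reconfigured to `B` in `G`. -/
def TARReconf {V : Type*} [DecidableEq V] (G : SimpleGraph V) (k : ℕ)
    (A B : Finset V) : Prop :=
  ∃ (n : ℕ) (W : ℕ → Finset V), W 0 = A ∧ W n = B ∧
    (∀ i ≤ n, IsIndepSet G (W i) ∧ A.card ≤ (W i).card + k) ∧
    (∀ i < n, (symmDiff (W i) (W (i + 1))).card ≤ 1)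

open Finset

section Core
set_option linter.unusedSectionVars false

variable {V : Type*} [DecidableEq V]

/-- Interval intersection predicate. -/
def Meets (lo hi : V → ℕ) (x y : V) : Prop := lo x ≤ hi y ∧ lo y ≤ hi x

instance (lo hi : V → ℕ) (x y : V) : Decidable (Meets lo hi x y) := by
  unfold Meets; infer_instance

/-- Blockers of `S` inside `P`. -/
def NN (lo hi : V → ℕ) (P S : Finset V) : Finset V :=
  P.filter (fun u => ∃ v ∈ S, Meets lo hi u v)

variable (lo hi : V → ℕ)

lemma NN_subset (P S : Finset V) : NN lo hi P S ⊆ P := filter_subset _ _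

lemma NN_mono_right {P S T : Finset V} (h : S ⊆ T) : NN lo hi P S ⊆ NN lo hi P T := by
  intro u hu
  simp only [NN, mem_filter] at hu ⊢
  exact ⟨hu.1, hu.2.imp (fun v hv => ⟨h hv.1, hv.2⟩)⟩

lemma NN_union_right (P S T : Finset V) :
    NN lo hi P (S ∪ T) = NN lo hi P S ∪ NN lo hi P T := by
  ext u
  simp only [NN, mem_filter, mem_union]
  constructor
  · rintro ⟨hu, v, hv, hm⟩
    rcases hv with hv | hv
    · exact Or.inl ⟨hu, v, hv, hm⟩
    · exact Or.inr ⟨hu, v, hv, hm⟩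
  · rintro (⟨hu, v, hv, hm⟩ | ⟨hu, v, hv, hm⟩)
    · exact ⟨hu, v, Or.inl hv, hm⟩
    · exact ⟨hu, v, Or.inr hv, hm⟩

/-- a sorted (by `hi`) duplicate-free listing of a finset -/
lemma exists_sorted_list (S : Finset V) :
    ∃ L : List V, L.Nodup ∧ L.toFinset = S ∧ L.Pairwise (fun a b => hi a ≤ hi b) := by
  classical
  induction S using Finset.strongInduction with
  | _ S ih =>
    rcases S.eq_empty_or_nonempty with rfl | hS
    · exact ⟨[], by simp, by simp, by simp⟩
    · obtain ⟨v, hv, hmin⟩ := S.exists_min_image hi hS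
      obtain ⟨L, hnd, htf, hsort⟩ := ih (S.erase v) (erase_ssubset hv)
      refine ⟨v :: L, ?_, ?_, ?_⟩
      · simp only [List.nodup_cons]
        refine ⟨fun hmem => ?_, hnd⟩
        rw [← List.mem_toFinset, htf] at hmem
        exact (mem_erase.mp hmem).1 rfl
      · simp [htf, insert_erase hv]
      · refine List.pairwise_cons.mpr ⟨fun b hb => ?_, hsort⟩
        rw [← List.mem_toFinset, htf] at hb
        exact hmin b (mem_of_mem_erase hb)

/-- minimal "cluster" existence -/
lemma exists_min_cluster (P Q : Finset V) (D : ℕ) (hQ : Q.Nonempty)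
    (h : (NN lo hi P Q).card ≤ Q.card + D) :
    ∃ S ⊆ Q, S.Nonempty ∧ (NN lo hi P S).card ≤ S.card + D ∧
      ∀ T ⊆ S, T.Nonempty → T ≠ S → T.card + D + 1 ≤ (NN lo hi P T).card := by
  classical
  set 𝒮 := Q.powerset.filter (fun S => S.Nonempty ∧ (NN lo hi P S).card ≤ S.card + D) with h𝒮
  have hQ𝒮 : Q ∈ 𝒮 := by
    simp only [h𝒮, mem_filter, mem_powerset]
    exact ⟨Subset.refl _, hQ, h⟩
  obtain ⟨S, hS𝒮, hSmin⟩ := 𝒮.exists_min_image Finset.card ⟨Q, hQ𝒮⟩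
  simp only [h𝒮, mem_filter, mem_powerset] at hS𝒮
  refine ⟨S, hS𝒮.1, hS𝒮.2.1, hS𝒮.2.2, fun T hTS hTne hTneq => ?_⟩
  by_contra hcon
  push_neg at hcon
  have hT𝒮 : T ∈ 𝒮 := by
    simp only [h𝒮, mem_filter, mem_powerset]
    exact ⟨hTS.trans hS𝒮.1, hTne, by omega⟩
  have := hSmin T hT𝒮
  have hlt : T.card < S.card := card_lt_card (ssubset_of_subset_of_ne hTS hTneq)
  omega



lemma cluster_peak (K D : ℕ) (hK : 1 ≤ K) (hlh : ∀ x, lo x ≤ hi x)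
    (P S H : Finset V) (hPS : Disjoint P S)
    (hload : ∀ t, ((P ∪ S).filter (fun x => lo x ≤ t ∧ t ≤ hi x)).card ≤ K + 1)
    (hF1 : (NN lo hi P S).card ≤ S.card + D)
    (hF2 : ∀ T ⊆ S, T.Nonempty → T ≠ S → T.card + D + 1 ≤ (NN lo hi P T).card)
    (hHS : H ⊆ S) (v : V) (hv : v ∈ H)
    (hhead : ∀ a ∈ H, hi a ≤ hi v)
    (htail : ∀ b ∈ S, b ∉ H → hi v ≤ hi b)
    (hne : H ≠ S) :
    (NN lo hi P H).card + 1 ≤ K + H.card + D := by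
  classical
  set ρ := hi v with hρ
  set Z := NN lo hi P H with hZ
  set Zc := Z.filter (fun u => lo u ≤ ρ ∧ ρ ≤ hi u) with hZc
  set ZL := Z.filter (fun u => hi u < ρ) with hZL
  have hZP : Z ⊆ P := NN_subset lo hi P H
  have hcover : Z ⊆ Zc ∪ ZL := by
    intro u hu
    have hu' := hu
    rw [hZ] at hu'
    simp only [NN, Finset.mem_filter] at hu'
    obtain ⟨huP, a, haH, hma⟩ := hu'
    have hlo : lo u ≤ ρ := hma.1.trans (hhead a haH)
    rcases le_or_gt ρ (hi u) with h | h
    · exact Finset.mem_union_left _ (Finset.mem_filter.mpr ⟨hu, hlo, h⟩)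
    · exact Finset.mem_union_right _ (Finset.mem_filter.mpr ⟨hu, h⟩)
  have hZcard : Z.card ≤ Zc.card + ZL.card :=
    (Finset.card_le_card hcover).trans (Finset.card_union_le _ _)
  set Sρ := S.filter (fun w => lo w ≤ ρ ∧ ρ ≤ hi w) with hSρ
  have hvSρ : v ∈ Sρ := Finset.mem_filter.mpr ⟨hHS hv, hlh v, le_refl _⟩
  have hZcSρ : Zc.card + Sρ.card ≤ K + 1 := by
    have hdisj : Disjoint Zc Sρ :=
      hPS.mono ((Finset.filter_subset _ _).trans hZP) (Finset.filter_subset _ _)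
    have hsub : Zc ∪ Sρ ⊆ (P ∪ S).filter (fun x => lo x ≤ ρ ∧ ρ ≤ hi x) := by
      intro x hx
      rcases Finset.mem_union.mp hx with hx | hx
      · rcases Finset.mem_filter.mp hx with ⟨hxZ, hxc⟩
        exact Finset.mem_filter.mpr ⟨Finset.mem_union_left _ (hZP hxZ), hxc⟩
      · rcases Finset.mem_filter.mp hx with ⟨hxS, hxc⟩
        exact Finset.mem_filter.mpr ⟨Finset.mem_union_right _ hxS, hxc⟩
    calc Zc.card + Sρ.card = (Zc ∪ Sρ).card := (Finset.card_union_of_disjoint hdisj).symm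
      _ ≤ _ := Finset.card_le_card hsub
      _ ≤ K + 1 := hload ρ
  have hSρpos : 1 ≤ Sρ.card := Finset.card_pos.mpr ⟨v, hvSρ⟩
  have hHpos : 1 ≤ H.card := Finset.card_pos.mpr ⟨v, hv⟩
  have hZS : Z.card ≤ S.card + D := (Finset.card_le_card (NN_mono_right lo hi hHS)).trans hF1
  rcases ZL.eq_empty_or_nonempty with hZLe | hZLne
  · have : Z.card ≤ Zc.card := by
      rw [hZLe] at hZcard; simpa using hZcard
    omega
  · obtain ⟨u0, hu0, hu0max⟩ := ZL.exists_max_image hi hZLne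
    set p := hi u0 with hp
    have hpρ : p < ρ := (Finset.mem_filter.mp hu0).2
    have hu0Z : u0 ∈ Z := (Finset.mem_filter.mp hu0).1
    have hu0P : u0 ∈ P := hZP hu0Z
    obtain ⟨a0, ha0H, hma0⟩ : ∃ a ∈ H, Meets lo hi u0 a := by
      have := hu0Z; rw [hZ] at this
      simpa [NN, Finset.mem_filter] using (Finset.mem_filter.mp this).2
    have ha0lo : lo a0 ≤ p := hma0.2
    set Sstar := S.filter (fun w => p < lo w) with hSstar
    rcases Sstar.eq_empty_or_nonempty with hSse | hSsne
    · -- everyone in S starts at or before p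
      have hallS : ∀ b ∈ S, lo b ≤ p := by
        intro b hb
        by_contra hcon
        push_neg at hcon
        have : b ∈ Sstar := Finset.mem_filter.mpr ⟨hb, hcon⟩
        rw [hSse] at this; exact absurd this (Finset.notMem_empty b)
      set U : Finset V := insert v (S \ H) with hU
      have hsubU : insert u0 U ⊆ (P ∪ S).filter (fun x => lo x ≤ p ∧ p ≤ hi x) := by
        intro x hx
        rcases Finset.mem_insert.mp hx with rfl | hx
        · exact Finset.mem_filter.mpr ⟨Finset.mem_union_left _ hu0P, hlh x, le_refl _⟩
        · rcases Finset.mem_insert.mp hx with rfl | hx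
          · exact Finset.mem_filter.mpr ⟨Finset.mem_union_right _ (hHS hv),
              hallS x (hHS hv), le_of_lt hpρ⟩
          · rcases Finset.mem_sdiff.mp hx with ⟨hxS, hxH⟩
            exact Finset.mem_filter.mpr ⟨Finset.mem_union_right _ hxS, hallS x hxS,
              le_of_lt (lt_of_lt_of_le hpρ (htail x hxS hxH))⟩
      have hu0U : u0 ∉ U := by
        intro hcon
        have hu0S : u0 ∈ S := by
          rcases Finset.mem_insert.mp hcon with rfl | h
          · exact hHS hv
          · exact (Finset.mem_sdiff.mp h).1
        exact (Finset.disjoint_left.mp hPS) hu0P hu0S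
      have hvU : v ∉ S \ H := by
        intro hcon; exact (Finset.mem_sdiff.mp hcon).2 hv
      have hcardU : (insert u0 U).card = (S \ H).card + 2 := by
        rw [Finset.card_insert_of_notMem hu0U, hU, Finset.card_insert_of_notMem hvU]
      have hKbound : (S \ H).card + 2 ≤ K + 1 := by
        rw [← hcardU]
        exact (Finset.card_le_card hsubU).trans (hload p)
      have hsd : (S \ H).card + H.card = S.card := Finset.card_sdiff_add_card_eq_card hHS
      omega
    · -- Sstar nonempty
      have hproper : Sstar ≠ S := by
        intro hcon
        have : a0 ∈ Sstar := by rw [hcon]; exact hHS ha0H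
        have := (Finset.mem_filter.mp this).2
        omega
      have hF2' : Sstar.card + D + 1 ≤ (NN lo hi P Sstar).card :=
        hF2 Sstar (Finset.filter_subset _ _) hSsne hproper
      have hdisj : Disjoint ZL (NN lo hi P Sstar) := by
        rw [Finset.disjoint_left]
        intro u huZL huN
        have h1 : hi u ≤ p := hu0max u huZL
        obtain ⟨w, hwS, hmw⟩ : ∃ w ∈ Sstar, Meets lo hi u w := by
          simpa [NN, Finset.mem_filter] using (Finset.mem_filter.mp huN).2
        have h2 : p < lo w := (Finset.mem_filter.mp hwS).2
        have h3 : lo w ≤ hi u := hmw.2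
        omega
      have hsubN : ZL ∪ NN lo hi P Sstar ⊆ NN lo hi P S := by
        apply Finset.union_subset
        · exact (Finset.filter_subset _ _).trans (NN_mono_right lo hi hHS)
        · exact NN_mono_right lo hi (Finset.filter_subset _ _)
      have hZLbound : ZL.card + (NN lo hi P Sstar).card ≤ (NN lo hi P S).card := by
        rw [← Finset.card_union_of_disjoint hdisj]
        exact Finset.card_le_card hsubN
      have hcompl : S \ Sstar ⊆ H ∪ (Sρ.erase v) := by
        intro w hw
        rcases Finset.mem_sdiff.mp hw with ⟨hwS, hwSs⟩
        have hwlo : lo w ≤ p := by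
          by_contra hcon
          push_neg at hcon
          exact hwSs (Finset.mem_filter.mpr ⟨hwS, hcon⟩)
        by_cases hwH : w ∈ H
        · exact Finset.mem_union_left _ hwH
        · refine Finset.mem_union_right _ (Finset.mem_erase.mpr ⟨?_, ?_⟩)
          · intro hcon; rw [hcon] at hwH; exact hwH hv
          · exact Finset.mem_filter.mpr ⟨hwS, hwlo.trans (le_of_lt hpρ), htail w hwS hwH⟩
      have hc1 : (S \ Sstar).card + Sstar.card = S.card :=
        Finset.card_sdiff_add_card_eq_card (Finset.filter_subset _ _)
      have hc2 : (S \ Sstar).card ≤ H.card + (Sρ.erase v).card :=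
        (Finset.card_le_card hcompl).trans (Finset.card_union_le _ _)
      have hc3 : (Sρ.erase v).card + 1 = Sρ.card := Finset.card_erase_add_one hvSρ
      omega


theorem core (K : ℕ) (hK : 1 ≤ K) (hlh : ∀ x, lo x ≤ hi x) :
    ∀ (n : ℕ) (P Q : Finset V), Q.card ≤ n → Disjoint P Q →
    (∀ t, ((P ∪ Q).filter (fun x => lo x ≤ t ∧ t ≤ hi x)).card ≤ K + 1) →
    ∀ D : ℕ, (NN lo hi P Q).card ≤ Q.card + D →
    ∃ L : List V, L.Nodup ∧ L.toFinset = Q ∧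
      ∀ j, 1 ≤ j → j ≤ L.length →
        (NN lo hi P (L.take j).toFinset).card + 1 ≤ K + j + D := by
  classical
  intro n
  induction n with
  | zero =>
    intro P Q hQn _ _ D _
    have : Q = ∅ := Finset.card_eq_zero.mp (Nat.le_zero.mp hQn)
    exact ⟨[], by simp, by simp [this], by intro j hj hj'; simp at hj'; omega⟩
  | succ n ih =>
    intro P Q hQn hdisj hload D hNQ
    rcases Q.eq_empty_or_nonempty with rfl | hQne
    · exact ⟨[], by simp, by simp, by intro j hj hj'; simp at hj'; omega⟩
    obtain ⟨S, hSQ, hSne, hF1, hF2⟩ := exists_min_cluster lo hi P Q D hQne hNQ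
    obtain ⟨LS, hndS, htfS, hsortS⟩ := exists_sorted_list hi S
    set NPS := NN lo hi P S with hNPS
    set P' := P \ NPS with hP'
    set Q' := Q \ S with hQ'
    have hNPSle : NPS.card ≤ S.card + D := hF1
    set D' := D + S.card - NPS.card with hD'
    have hDkey : D' + NPS.card = D + S.card := by omega
    have hSQcard : Q'.card + S.card = Q.card := Finset.card_sdiff_add_card_eq_card hSQ
    have hScard : 1 ≤ S.card := Finset.card_pos.mpr hSne
    have hdisj' : Disjoint P' Q' :=
      hdisj.mono (Finset.sdiff_subset) (Finset.sdiff_subset)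
    have hPQsub : P' ∪ Q' ⊆ P ∪ Q :=
      Finset.union_subset_union (Finset.sdiff_subset) (Finset.sdiff_subset)
    have hload' : ∀ t, ((P' ∪ Q').filter (fun x => lo x ≤ t ∧ t ≤ hi x)).card ≤ K + 1 :=
      fun t => (Finset.card_le_card (Finset.filter_subset_filter _ hPQsub)).trans (hload t)
    have hNPSsub : NPS ⊆ NN lo hi P Q := NN_mono_right lo hi hSQ
    have hN' : (NN lo hi P' Q').card ≤ Q'.card + D' := by
      have hsub : NN lo hi P' Q' ⊆ (NN lo hi P Q) \ NPS := by
        intro u hu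
        simp only [NN, Finset.mem_filter, hP', Finset.mem_sdiff, hQ'] at hu
        obtain ⟨⟨huP, huNPS⟩, w, ⟨hwQ, _⟩, hm⟩ := hu
        refine Finset.mem_sdiff.mpr ⟨?_, huNPS⟩
        simp only [NN, Finset.mem_filter]
        exact ⟨huP, w, hwQ, hm⟩
      have h1 : ((NN lo hi P Q) \ NPS).card + NPS.card = (NN lo hi P Q).card :=
        Finset.card_sdiff_add_card_eq_card hNPSsub
      have h2 := Finset.card_le_card hsub
      omega
    have hQ'n : Q'.card ≤ n := by omega
    obtain ⟨L', hnd', htf', hpre'⟩ := ih P' Q' hQ'n hdisj' hload' D' hN'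
    have hLSlen : LS.length = S.card := by
      rw [← htfS]; exact (List.toFinset_card_of_nodup hndS).symm
    have hdisjL : LS.Disjoint L' := by
      intro a haS haL'
      rw [← List.mem_toFinset, htfS] at haS
      rw [← List.mem_toFinset, htf'] at haL'
      exact (Finset.mem_sdiff.mp haL').2 (haS)
    refine ⟨LS ++ L', List.Nodup.append hndS hnd' hdisjL, ?_, ?_⟩
    · rw [List.toFinset_append, htfS, htf']
      exact Finset.union_sdiff_of_subset hSQ
    intro j hj1 hjlen
    rw [List.length_append] at hjlen
    rcases le_or_gt j LS.length with hjS | hjS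
    · -- within the cluster
      have htake : (LS ++ L').take j = LS.take j := List.take_append_of_le_length hjS
      rw [htake]
      rcases eq_or_lt_of_le hjS with hjeq | hjlt
      · -- j = LS.length : full cluster
        rw [hjeq, List.take_length, htfS]
        have e1 : (NN lo hi P S).card = NPS.card := rfl
        omega
      · -- j < LS.length : proper prefix, apply cluster_peak
        set H := (LS.take j).toFinset with hH
        have hsubl : (LS.take j).Sublist LS := List.take_sublist _ _
        have hndT : (LS.take j).Nodup := hndS.sublist hsubl
        have hHS : H ⊆ S := by
          intro a ha
          rw [hH, List.mem_toFinset] at ha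
          rw [← htfS, List.mem_toFinset]
          exact hsubl.mem ha
        have hHcard : H.card = j := by
          rw [hH, List.toFinset_card_of_nodup hndT, List.length_take]
          omega
        have hHne : H.Nonempty := Finset.card_pos.mp (by omega)
        have hHneS : H ≠ S := by
          intro hcon
          rw [hcon] at hHcard
          omega
        obtain ⟨v, hvH, hvmax⟩ := H.exists_max_image hi hHne
        have hsplit : LS = LS.take j ++ LS.drop j := (List.take_append_drop j LS).symm
        have hpair : ∀ a ∈ LS.take j, ∀ b ∈ LS.drop j, hi a ≤ hi b := by
          have := hsortS
          rw [hsplit] at this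
          exact (List.pairwise_append.mp this).2.2
        have htail : ∀ b ∈ S, b ∉ H → hi v ≤ hi b := by
          intro b hbS hbH
          have hbLS : b ∈ LS := by rw [← List.mem_toFinset, htfS]; exact hbS
          have hbdrop : b ∈ LS.drop j := by
            rcases (List.mem_append.mp (by rw [← hsplit]; exact hbLS)) with h | h
            · exact absurd (by rw [hH, List.mem_toFinset]; exact h) hbH
            · exact h
          exact hpair v (by rw [← List.mem_toFinset, ← hH]; exact hvH) b hbdrop
        have hloadPS : ∀ t, ((P ∪ S).filter (fun x => lo x ≤ t ∧ t ≤ hi x)).card ≤ K + 1 := by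
          intro t
          refine (Finset.card_le_card (Finset.filter_subset_filter _ ?_)).trans (hload t)
          exact Finset.union_subset_union (Finset.Subset.refl _) hSQ
        have hdisjPS : Disjoint P S := hdisj.mono_right hSQ
        have := cluster_peak lo hi K D hK hlh P S H hdisjPS hloadPS hF1 hF2 hHS v hvH
          hvmax htail hHneS
        omega
    · -- beyond the cluster
      have htake : (LS ++ L').take j = LS ++ L'.take (j - LS.length) := by
        rw [List.take_append, List.take_of_length_le (le_of_lt hjS)]
      set j' := j - LS.length with hj'
      have hj'1 : 1 ≤ j' := by omega
      have hj'len : j' ≤ L'.length := by omega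
      have hbound := hpre' j' hj'1 hj'len
      rw [htake, List.toFinset_append, htfS]
      set Vj := (L'.take j').toFinset with hVj
      have hNsplit : NN lo hi P (S ∪ Vj) ⊆ NPS ∪ NN lo hi P' Vj := by
        intro u hu
        rw [NN_union_right] at hu
        rcases Finset.mem_union.mp hu with hu | hu
        · exact Finset.mem_union_left _ hu
        · by_cases hmem : u ∈ NPS
          · exact Finset.mem_union_left _ hmem
          · refine Finset.mem_union_right _ ?_
            simp only [NN, Finset.mem_filter] at hu ⊢
            exact ⟨Finset.mem_sdiff.mpr ⟨hu.1, hmem⟩, hu.2⟩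
      have hcard : (NN lo hi P (S ∪ Vj)).card ≤ NPS.card + (NN lo hi P' Vj).card :=
        (Finset.card_le_card hNsplit).trans (Finset.card_union_le _ _)
      have e1 : (NN lo hi P S).card = NPS.card := rfl
      have e2 : j' + LS.length = j := by omega
      omega

end Core


section Reach
set_option linter.unusedSectionVars false
variable {V : Type*} [DecidableEq V] (G : SimpleGraph V)

lemma indep_subset {A B : Finset V} (h : IsIndepSet G B) (hs : A ⊆ B) : IsIndepSet G A :=
  fun u hu v hv => h u (hs hu) v (hs hv)

/-- internal reachability predicate matching `TARReconf` with baseline `s`. -/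
def Reach (s m : ℕ) (A B : Finset V) : Prop :=
  ∃ (n : ℕ) (W : ℕ → Finset V), W 0 = A ∧ W n = B ∧
    (∀ i ≤ n, IsIndepSet G (W i) ∧ s ≤ (W i).card + m) ∧
    (∀ i < n, (symmDiff (W i) (W (i + 1))).card ≤ 1)

lemma reach_refl {s m : ℕ} {A : Finset V} (h1 : IsIndepSet G A) (h2 : s ≤ A.card + m) :
    Reach G s m A A :=
  ⟨0, fun _ => A, rfl, rfl, fun _ _ => ⟨h1, h2⟩, fun i h => absurd h (Nat.not_lt_zero i)⟩

lemma reach_trans {s m : ℕ} {A B C : Finset V}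
    (h1 : Reach G s m A B) (h2 : Reach G s m B C) : Reach G s m A C := by
  obtain ⟨n1, W1, hW10, hW1n, hcond1, hstep1⟩ := h1
  obtain ⟨n2, W2, hW20, hW2n, hcond2, hstep2⟩ := h2
  refine ⟨n1 + n2, fun i => if i < n1 then W1 i else W2 (i - n1), ?_, ?_, ?_, ?_⟩
  · rcases Nat.eq_zero_or_pos n1 with h | h
    · subst h
      show (if (0:ℕ) < 0 then W1 0 else W2 (0 - 0)) = A
      rw [if_neg (by omega)]
      rw [Nat.sub_zero, hW20, ← hW1n, hW10]
    · show (if (0:ℕ) < n1 then W1 0 else W2 (0 - n1)) = A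
      rw [if_pos h, hW10]
  · show (if n1 + n2 < n1 then W1 (n1 + n2) else W2 (n1 + n2 - n1)) = C
    rw [if_neg (by omega), show n1 + n2 - n1 = n2 by omega, hW2n]
  · intro i hi
    show IsIndepSet G (if i < n1 then W1 i else W2 (i - n1)) ∧
      s ≤ (if i < n1 then W1 i else W2 (i - n1)).card + m
    by_cases h : i < n1
    · rw [if_pos h]; exact hcond1 i (le_of_lt h)
    · rw [if_neg h]; exact hcond2 (i - n1) (by omega)
  · intro i hi
    show (symmDiff (if i < n1 then W1 i else W2 (i - n1))
      (if i + 1 < n1 then W1 (i + 1) else W2 (i + 1 - n1))).card ≤ 1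
    by_cases h : i + 1 < n1
    · rw [if_pos h, if_pos (by omega)]
      exact hstep1 i (by omega)
    · by_cases h' : i < n1
      · have hieq : i + 1 = n1 := by omega
        rw [if_pos h', if_neg h, hieq, Nat.sub_self, hW20, ← hW1n, ← hieq]
        exact hstep1 i h'
      · rw [if_neg h, if_neg h', show i + 1 - n1 = (i - n1) + 1 by omega]
        exact hstep2 (i - n1) (by omega)

lemma symmDiff_erase_card {A : Finset V} {x : V} (hx : x ∈ A) :
    (symmDiff A (A.erase x)).card ≤ 1 := by
  have hsub : symmDiff A (A.erase x) ⊆ {x} := by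
    intro y hy
    rcases Finset.mem_symmDiff.mp hy with ⟨h1, h2⟩ | ⟨h1, h2⟩
    · by_cases hxy : y = x
      · simp [hxy]
      · exact absurd (Finset.mem_erase.mpr ⟨hxy, h1⟩) h2
    · exact absurd (Finset.mem_of_mem_erase h1) h2
  calc (symmDiff A (A.erase x)).card ≤ ({x} : Finset V).card := Finset.card_le_card hsub
    _ = 1 := Finset.card_singleton x

lemma symmDiff_insert_card {A : Finset V} {x : V} (hx : x ∉ A) :
    (symmDiff A (insert x A)).card ≤ 1 := by
  have hsub : symmDiff A (insert x A) ⊆ {x} := by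
    intro y hy
    rcases Finset.mem_symmDiff.mp hy with ⟨h1, h2⟩ | ⟨h1, h2⟩
    · exact absurd (Finset.mem_insert_of_mem h1) h2
    · rcases Finset.mem_insert.mp h1 with rfl | h
      · simp
      · exact absurd h h2
  calc (symmDiff A (insert x A)).card ≤ ({x} : Finset V).card := Finset.card_le_card hsub
    _ = 1 := Finset.card_singleton x

lemma reach_pair {s m : ℕ} {A B : Finset V} (hA : IsIndepSet G A) (hB : IsIndepSet G B)
    (hcA : s ≤ A.card + m) (hcB : s ≤ B.card + m)
    (hstep : (symmDiff A B).card ≤ 1) : Reach G s m A B := by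
  refine ⟨1, fun i => if i = 0 then A else B, by simp, by simp, ?_, ?_⟩
  · intro i _
    by_cases h : i = 0 <;> simp [h, hA, hB, hcA, hcB]
  · intro i hi
    have : i = 0 := by omega
    simp [this, hstep]

/-- walk down from `A` to a subset `B` (removing one element at a time). -/
lemma reach_sdiff {s m : ℕ} : ∀ (A B : Finset V), B ⊆ A → IsIndepSet G A →
    s ≤ B.card + m → Reach G s m A B := by
  intro A
  induction A using Finset.strongInduction with
  | _ A ih =>
    intro B hBA hA hcB
    rcases eq_or_ne A B with rfl | hne
    · exact reach_refl G hA (le_trans hcB (by omega))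
    · have : (A \ B).Nonempty := by
        rw [Finset.sdiff_nonempty]
        intro hcon
        exact hne (Finset.Subset.antisymm hcon hBA)
      obtain ⟨x, hx⟩ := this
      rcases Finset.mem_sdiff.mp hx with ⟨hxA, hxB⟩
      have hBsub : B ⊆ A.erase x := fun y hy =>
        Finset.mem_erase.mpr ⟨fun hcon => hxB (hcon ▸ hy), hBA hy⟩
      have herase : IsIndepSet G (A.erase x) := indep_subset G hA (Finset.erase_subset _ _)
      have hcerase : s ≤ (A.erase x).card + m :=
        le_trans hcB (by have := Finset.card_le_card hBsub; omega)
      refine reach_trans G (reach_pair G hA herase ?_ hcerase (symmDiff_erase_card hxA)) ?_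
      · exact le_trans hcerase (by have := Finset.card_erase_le (s := A) (a := x); omega)
      · exact ih (A.erase x) (Finset.erase_ssubset hxA) B hBsub herase hcB

/-- reverse a reconfiguration walk. -/
lemma reach_symm {s m : ℕ} {A B : Finset V} (h : Reach G s m A B) : Reach G s m B A := by
  obtain ⟨n, W, hW0, hWn, hcond, hstep⟩ := h
  refine ⟨n, fun i => W (n - i), by simp [hWn], by simp [hW0], ?_, ?_⟩
  · intro i hi
    exact hcond (n - i) (by omega)
  · intro i hi
    have e1 : n - i = (n - (i + 1)) + 1 := by omega
    show (symmDiff (W (n - i)) (W (n - (i + 1)))).card ≤ 1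
    rw [symmDiff_comm, e1]
    exact hstep (n - (i + 1)) (by omega)

/-- walk up from `A` to a superset `B` (inserting one element at a time). -/
lemma reach_superset {s m : ℕ} (A B : Finset V) (hAB : A ⊆ B) (hB : IsIndepSet G B)
    (hcA : s ≤ A.card + m) : Reach G s m A B :=
  reach_symm G (reach_sdiff G B A hAB hB hcA)

end Reach

section MainProof
set_option linter.unusedSectionVars false
set_option maxHeartbeats 1000000

/-- the TAR reconfiguration threshold of any graph is at most
`max (pw G) 1`: if `G` has a path decomposition of width `k`, then any two equal-size
independent sets can be `max k 1`-TAR reconfigured into each other. -/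
theorem tar_le_pathwidth {V : Type*} [Fintype V] [DecidableEq V] (G : SimpleGraph V)
    (k : ℕ) (hpw : HasPathDecompOfWidth G k)
    (I J : Finset V) (hI : IsIndepSet G I) (hJ : IsIndepSet G J)
    (hcard : I.card = J.card) :
    TARReconf G (max k 1) I J := by
  classical
  obtain ⟨r, X, hcover, hedge, hconv, hsize⟩ := hpw
  set K := max k 1 with hKdef
  have hK : 1 ≤ K := le_max_right _ _
  have hbags : ∀ v : V, ((Finset.range (r+1)).filter (fun i => v ∈ X i)).Nonempty := by
    intro v
    obtain ⟨i, hir, hvi⟩ := hcover v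
    exact ⟨i, Finset.mem_filter.mpr ⟨Finset.mem_range.mpr (by omega), hvi⟩⟩
  set bg : V → Finset ℕ := fun v => (Finset.range (r+1)).filter (fun i => v ∈ X i) with hbg
  set lo : V → ℕ := fun v => (bg v).min' (hbags v) with hlodef
  set hi : V → ℕ := fun v => (bg v).max' (hbags v) with hhidef
  have hlomem : ∀ v, lo v ∈ bg v := fun v => (bg v).min'_mem (hbags v)
  have hhimem : ∀ v, hi v ∈ bg v := fun v => (bg v).max'_mem (hbags v)
  have hbgX : ∀ v i, i ∈ bg v → v ∈ X i ∧ i ≤ r := by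
    intro v i hiv
    rcases Finset.mem_filter.mp hiv with ⟨hir, hvX⟩
    exact ⟨hvX, by have := Finset.mem_range.mp hir; omega⟩
  have hlh : ∀ v, lo v ≤ hi v := fun v => (bg v).min'_le _ (hhimem v)
  have hhir : ∀ v, hi v ≤ r := fun v => (hbgX v _ (hhimem v)).2
  have hmem : ∀ v t, lo v ≤ t → t ≤ hi v → v ∈ X t := by
    intro v t h1 h2
    exact hconv v (lo v) t (hi v) h1 h2 (hhir v) (hbgX v _ (hlomem v)).1 (hbgX v _ (hhimem v)).1
  have hadj : ∀ u v, G.Adj u v → Meets lo hi u v := by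
    intro u v ha
    obtain ⟨i, hir, hui, hvi⟩ := hedge u v ha
    have hu : i ∈ bg u := Finset.mem_filter.mpr ⟨Finset.mem_range.mpr (by omega), hui⟩
    have hv : i ∈ bg v := Finset.mem_filter.mpr ⟨Finset.mem_range.mpr (by omega), hvi⟩
    exact ⟨((bg u).min'_le _ hu).trans ((bg v).le_max' _ hv),
      ((bg v).min'_le _ hv).trans ((bg u).le_max' _ hu)⟩
  have hload : ∀ (A : Finset V) (t : ℕ),
      (A.filter (fun x => lo x ≤ t ∧ t ≤ hi x)).card ≤ K + 1 := by
    intro A t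
    by_cases ht : t ≤ r
    · have hsub : A.filter (fun x => lo x ≤ t ∧ t ≤ hi x) ⊆ X t := by
        intro x hx
        rcases Finset.mem_filter.mp hx with ⟨_, h1, h2⟩
        exact hmem x t h1 h2
      calc (A.filter (fun x => lo x ≤ t ∧ t ≤ hi x)).card ≤ (X t).card :=
            Finset.card_le_card hsub
        _ ≤ k + 1 := hsize t ht
        _ ≤ K + 1 := by have : k ≤ K := le_max_left _ _; omega
    · have : A.filter (fun x => lo x ≤ t ∧ t ≤ hi x) = ∅ := by
        apply Finset.filter_false_of_mem
        intro x _ hcon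
        have := hhir x
        omega
      rw [this]
      simp
  set P := I \ J with hPdef
  set Q := J \ I with hQdef
  have hPQ : Disjoint P Q := by
    rw [Finset.disjoint_left]
    intro a haP haQ
    exact (Finset.mem_sdiff.mp haP).2 (Finset.mem_sdiff.mp haQ).1
  have hQI : Disjoint Q I := by
    rw [Finset.disjoint_left]
    intro a haQ haI
    exact (Finset.mem_sdiff.mp haQ).2 haI
  have hPcard : P.card = Q.card := by
    have h1 := Finset.card_inter_add_card_sdiff I J
    have h2 := Finset.card_inter_add_card_sdiff J I
    rw [Finset.inter_comm] at h2
    rw [← hPdef] at h1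
    rw [← hQdef] at h2
    omega
  have hNQ : (NN lo hi P Q).card ≤ Q.card + 0 := by
    have := Finset.card_le_card (NN_subset lo hi P Q)
    omega
  obtain ⟨L, hnd, htf, hpre⟩ := core lo hi K hK hlh Q.card P Q (le_refl _) hPQ
    (fun t => hload (P ∪ Q) t) 0 hNQ
  have hLlen : L.length = Q.card := by
    rw [← htf]
    exact (List.toFinset_card_of_nodup hnd).symm
  -- hybrid independence
  have hybrid : ∀ Vs : Finset V, Vs ⊆ Q → IsIndepSet G ((I \ NN lo hi P Vs) ∪ Vs) := by
    intro Vs hVs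
    have key : ∀ x y, x ∈ I \ NN lo hi P Vs → y ∈ Vs → ¬ G.Adj x y := by
      intro x y hx hy haxy
      rcases Finset.mem_sdiff.mp hx with ⟨hxI, hxN⟩
      by_cases hxJ : x ∈ J
      · exact hJ x hxJ y (Finset.mem_sdiff.mp (hVs hy)).1 haxy
      · have hxP : x ∈ P := Finset.mem_sdiff.mpr ⟨hxI, hxJ⟩
        apply hxN
        simp only [NN, Finset.mem_filter]
        exact ⟨hxP, y, hy, hadj x y haxy⟩
    intro u hu v hv hadj'
    rcases Finset.mem_union.mp hu with hu' | hu' <;> rcases Finset.mem_union.mp hv with hv' | hv'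
    · exact hI u (Finset.mem_sdiff.mp hu').1 v (Finset.mem_sdiff.mp hv').1 hadj'
    · exact key u v hu' hv' hadj'
    · exact key v u hv' hu' hadj'.symm
    · exact hJ u (Finset.mem_sdiff.mp (hVs hu')).1 v (Finset.mem_sdiff.mp (hVs hv')).1 hadj'
  -- cardinality of hybrid sets
  have hybrid_card : ∀ Vs : Finset V, Vs ⊆ Q →
      ((I \ NN lo hi P Vs) ∪ Vs).card + (NN lo hi P Vs).card = I.card + Vs.card := by
    intro Vs hVs
    have hNI : NN lo hi P Vs ⊆ I :=
      (NN_subset lo hi P Vs).trans (Finset.sdiff_subset)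
    have hdisj : Disjoint (I \ NN lo hi P Vs) Vs := by
      rw [Finset.disjoint_left]
      intro a ha haV
      exact (Finset.disjoint_left.mp hQI) (hVs haV) (Finset.mem_sdiff.mp ha).1
    rw [Finset.card_union_of_disjoint hdisj]
    have := Finset.card_sdiff_add_card_eq_card hNI
    omega
  -- stage induction
  have stages : ∀ j, j ≤ L.length →
      Reach G I.card K I ((I \ NN lo hi P (L.take j).toFinset) ∪ (L.take j).toFinset) := by
    intro j
    induction j with
    | zero =>
      intro _
      have h0 : NN lo hi P ((L.take 0).toFinset) = ∅ := by
        simp [NN]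
      rw [h0]
      simp only [List.take_zero, List.toFinset_nil, Finset.sdiff_empty, Finset.union_empty]
      exact reach_refl G hI (by omega)
    | succ j ih =>
      intro hj1
      have hjlt : j < L.length := by omega
      have prev := ih (by omega)
      set v := L.get ⟨j, hjlt⟩ with hvdef
      have htakes : L.take (j+1) = L.take j ++ [v] := by
        rw [List.take_succ]
        congr
        rw [List.getElem?_eq_getElem hjlt]
        simp [hvdef]
      set Vj := (L.take j).toFinset with hVj
      set Vj1 := (L.take (j+1)).toFinset with hVj1
      have hVjsub : Vj ⊆ Vj1 := by
        rw [hVj, hVj1, htakes]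
        intro a ha
        rw [List.mem_toFinset] at ha
        rw [List.mem_toFinset, List.mem_append]
        exact Or.inl ha
      have hVj1Q : Vj1 ⊆ Q := by
        rw [hVj1, ← htf]
        intro a ha
        rw [List.mem_toFinset] at ha ⊢
        exact (List.take_sublist _ _).mem ha
      have hVjQ : Vj ⊆ Q := hVjsub.trans hVj1Q
      have hNmono : NN lo hi P Vj ⊆ NN lo hi P Vj1 := NN_mono_right lo hi hVjsub
      -- cards
      have hndtake : (L.take (j+1)).Nodup := hnd.sublist (List.take_sublist _ _)
      have hVj1card : Vj1.card = j + 1 := by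
        rw [hVj1, List.toFinset_card_of_nodup hndtake, List.length_take]
        omega
      have hVjcard : Vj.card = j := by
        rw [hVj, List.toFinset_card_of_nodup (hnd.sublist (List.take_sublist _ _)),
          List.length_take]
        omega
      have hNbound : (NN lo hi P Vj1).card + 1 ≤ K + (j + 1) := by
        have := hpre (j+1) (by omega) (by omega)
        rw [← hVj1] at this
        omega
      -- middle set
      set B : Finset V := (I \ NN lo hi P Vj1) ∪ Vj with hB
      have hBcard : B.card + (NN lo hi P Vj1).card = I.card + j := by
        have hNI : NN lo hi P Vj1 ⊆ I :=
          (NN_subset lo hi P Vj1).trans (Finset.sdiff_subset)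
        have hdisj : Disjoint (I \ NN lo hi P Vj1) Vj := by
          rw [Finset.disjoint_left]
          intro a ha haV
          exact (Finset.disjoint_left.mp hQI) (hVjQ haV) (Finset.mem_sdiff.mp ha).1
        rw [hB, Finset.card_union_of_disjoint hdisj]
        have := Finset.card_sdiff_add_card_eq_card hNI
        omega
      have hBle : I.card ≤ B.card + K := by omega
      -- step 1 : down from stage j to B
      have hstep1 : Reach G I.card K ((I \ NN lo hi P Vj) ∪ Vj) B := by
        apply reach_sdiff
        · rw [hB]
          exact Finset.union_subset_union (Finset.sdiff_subset_sdiff (le_refl I) hNmono)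
            (Finset.Subset.refl _)
        · exact hybrid Vj hVjQ
        · exact hBle
      -- step 2 : up from B to stage j+1
      have hstep2 : Reach G I.card K B ((I \ NN lo hi P Vj1) ∪ Vj1) := by
        apply reach_superset
        · rw [hB]
          exact Finset.union_subset_union (Finset.Subset.refl _) hVjsub
        · exact hybrid Vj1 hVj1Q
        · exact hBle
      exact reach_trans G prev (reach_trans G hstep1 hstep2)
  -- conclude
  have hfinal := stages L.length (le_refl _)
  rw [List.take_length, htf] at hfinal
  have hJsub : J ⊆ (I \ NN lo hi P Q) ∪ Q := by
    intro x hx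
    by_cases hxI : x ∈ I
    · refine Finset.mem_union_left _ (Finset.mem_sdiff.mpr ⟨hxI, fun hcon => ?_⟩)
      have hxP : x ∈ P := NN_subset lo hi P Q hcon
      exact (Finset.mem_sdiff.mp hxP).2 hx
    · exact Finset.mem_union_right _ (Finset.mem_sdiff.mpr ⟨hx, hxI⟩)
  have hlast : Reach G I.card K ((I \ NN lo hi P Q) ∪ Q) J := by
    apply reach_sdiff
    · exact hJsub
    · exact hybrid Q (Finset.Subset.refl _)
    · omega
  obtain ⟨n, W, h1, h2, h3, h4⟩ := reach_trans G hfinal hlast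
  exact ⟨n, W, h1, h2, h3, h4⟩

end MainProof
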